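/- arXiv:0908.3102 — 3 statements merged into one kernel-verified Lean document; each statement's English description precedes it below -/
import Mathlib

section
/- Let ε₁,…,εₙ ∈ ℝ, Z₁,…,Zₙ ∈ {0,1}, λ ∈ ℝ with 1 + λ Zⱼ εⱼ > 0 for all j and ∑ⱼ Zⱼεⱼ/(1+λZⱼεⱼ) = 0. Then |λ| · (1/n) ∑_{j=1}^n Zⱼ εⱼ² ≤ |(1/n) ∑_{j=1}^n Zⱼ εⱼ| · (1 + |λ| · max_{1≤j≤n} |Zⱼ εⱼ|). -/
/-- The key deterministic inequality in the proof of Lemma 3.1: if `1 + λ Z j ε j > 0` for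
all `j` and `∑ Z j ε j / (1 + λ Z j ε j) = 0`, then
`|λ| ⬝ (1/n) ∑ Z j ε j ^ 2 ≤ |(1/n) ∑ Z j ε j| ⬝ (1 + |λ| ⬝ max j |Z j ε j|)`. -/
theorem el_lambda_bound {n : ℕ} (hn : 0 < n) (ε Z : Fin n → ℝ)
    (hZ : ∀ j, Z j = 0 ∨ Z j = 1) (lam : ℝ)
    (hpos : ∀ j, 0 < 1 + lam * Z j * ε j)
    (hsum : ∑ j, Z j * ε j / (1 + lam * Z j * ε j) = 0) :
    |lam| * ((1 / (n : ℝ)) * ∑ j, Z j * ε j ^ 2)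
      ≤ |(1 / (n : ℝ)) * ∑ j, Z j * ε j| *
        (1 + |lam| * (Finset.univ.sup' (Finset.univ_nonempty_iff.mpr
          (Fin.pos_iff_nonempty.mp hn)) fun j => |Z j * ε j|)) := by
  set M := (Finset.univ.sup' (Finset.univ_nonempty_iff.mpr
      (Fin.pos_iff_nonempty.mp hn)) fun j => |Z j * ε j|) with hMdef
  have hM0 : 0 ≤ M := by
    have j0 : Fin n := ⟨0, hn⟩
    exact le_trans (abs_nonneg (Z j0 * ε j0)) (Finset.le_sup' (fun j => |Z j * ε j|) (Finset.mem_univ j0))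
  have hD : (0:ℝ) < 1 + |lam| * M := by positivity
  set T : ℝ := ∑ j, (Z j * ε j) ^ 2 / (1 + lam * Z j * ε j) with hTdef
  have key : ∀ j ∈ Finset.univ, Z j * ε j / (1 + lam * Z j * ε j)
      = Z j * ε j - lam * ((Z j * ε j) ^ 2 / (1 + lam * Z j * ε j)) := by
    intro j _
    have h := (hpos j).ne'
    rw [eq_sub_iff_add_eq, mul_div_assoc', ← add_div, div_eq_iff h]
    ring
  have hS : ∑ j, Z j * ε j = lam * T := by
    have h2 := hsum
    rw [Finset.sum_congr rfl key, Finset.sum_sub_distrib, ← Finset.mul_sum] at h2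
    linarith
  have hT0 : 0 ≤ T := Finset.sum_nonneg fun j _ =>
    div_nonneg (sq_nonneg _) (hpos j).le
  have habs : |∑ j, Z j * ε j| = |lam| * T := by
    rw [hS, abs_mul, abs_of_nonneg hT0]
  have hterm : ∀ j, Z j * ε j ^ 2 = (Z j * ε j) ^ 2 := by
    intro j; rcases hZ j with h | h <;> rw [h] <;> ring
  have hN : ∑ j, Z j * ε j ^ 2 ≤ T * (1 + |lam| * M) := by
    rw [hTdef, Finset.sum_mul]
    apply Finset.sum_le_sum
    intro j _
    rw [hterm j]
    rw [div_mul_eq_mul_div, le_div_iff₀ (hpos j)]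
    have hle : 1 + lam * Z j * ε j ≤ 1 + |lam| * M := by
      have h1 : lam * Z j * ε j ≤ |lam| * M := by
        calc lam * Z j * ε j ≤ |lam * Z j * ε j| := le_abs_self _
        _ = |lam| * |Z j * ε j| := by rw [mul_assoc, abs_mul]
        _ ≤ |lam| * M := by
            exact mul_le_mul_of_nonneg_left
              (Finset.le_sup' (fun j => |Z j * ε j|) (Finset.mem_univ j)) (abs_nonneg _)
      linarith
    nlinarith [sq_nonneg (Z j * ε j)]
  have hn0 : (0:ℝ) < (n:ℝ) := by exact_mod_cast hn
  have h1n : (0:ℝ) ≤ 1 / (n:ℝ) := by positivity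
  rw [abs_mul, abs_of_nonneg h1n, habs]
  have := mul_le_mul_of_nonneg_left hN (mul_nonneg h1n (abs_nonneg lam))
  nlinarith [this]
end

section
/- Let ε and (X,Y) be random variables with ε square-integrable, Eε = 0, Var ε = σ² > 0, and let h̄(ε) = E[h(X,Y)|ε] for a square-integrable h. Define s*(ε) = (EZ)^{-1}[h̄(ε) − E h̄(ε) − σ^{-2} E{ε h̄(ε)} · ε], where Z ∈ {0,1} is independent of ε with EZ > 0. Then s* ∈ S, i.e., E[s*(ε)] = 0 and E[ε s*(ε)] = 0, and E[Z s*(ε) s(ε)] = E[h(X,Y) s(ε)] for every s with E s(ε) = 0 and E[ε s(ε)] = 0. -/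
open MeasureTheory

/-- Verification of equation (4.7): with `h̄(ε) = E[h(X,Y) | ε]`, `Eε = 0`, `Var ε = σ² > 0`,
`Z ∈ {0,1}` independent of `ε` with `EZ > 0`, the function
`s*(ε) = (EZ)⁻¹ [h̄(ε) - E h̄(ε) - σ⁻² E{ε h̄(ε)} ε]` lies in `S` (i.e. `E s*(ε) = 0` and
`E[ε s*(ε)] = 0`) and satisfies `E[Z s*(ε) s(ε)] = E[h(X,Y) s(ε)]` for every `s ∈ S`. -/
theorem sstar_in_S_and_eq47 {Ω : Type*} [MeasurableSpace Ω]
    (μ : Measure Ω) [IsProbabilityMeasure μ]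
    (ε : Ω → ℝ) (hε : Measurable ε)
    (H : Ω → ℝ) (hH : Measurable H) (hH2 : MemLp H 2 μ)   -- H = h(X,Y)
    (hbar : ℝ → ℝ) (hhbar : Measurable hbar)
    (hhbar2 : MemLp (fun ω => hbar (ε ω)) 2 μ)
    -- h̄ ∘ ε is a version of the conditional expectation of H given ε
    (hcond : μ[H | MeasurableSpace.comap ε inferInstance] =ᵐ[μ] fun ω => hbar (ε ω))
    (Z : Ω → ℝ) (hZ : Measurable Z) (hZ01 : ∀ ω, Z ω = 0 ∨ Z ω = 1)
    (hZpos : 0 < ∫ ω, Z ω ∂μ)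
    (hindep : ProbabilityTheory.IndepFun Z ε μ)
    (hε2 : MemLp ε 2 μ) (hεmean : ∫ ω, ε ω ∂μ = 0)
    (σ2 : ℝ) (hσ2 : 0 < σ2) (hεvar : ∫ ω, ε ω ^ 2 ∂μ = σ2)
    (sstar : ℝ → ℝ)
    (hsstar : ∀ y, sstar y = (∫ ω, Z ω ∂μ)⁻¹ *
      (hbar y - (∫ ω, hbar (ε ω) ∂μ) - (∫ ω, ε ω * hbar (ε ω) ∂μ) / σ2 * y)) :
    ((∫ ω, sstar (ε ω) ∂μ = 0) ∧ (∫ ω, ε ω * sstar (ε ω) ∂μ = 0)) ∧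
      ∀ s : ℝ → ℝ, Measurable s → MemLp (fun ω => s (ε ω)) 2 μ →
        (∫ ω, s (ε ω) ∂μ = 0) → (∫ ω, ε ω * s (ε ω) ∂μ = 0) →
        ∫ ω, Z ω * sstar (ε ω) * s (ε ω) ∂μ = ∫ ω, H ω * s (ε ω) ∂μ := by
  have mulint : ∀ (f g : Ω → ℝ), MemLp f 2 μ → MemLp g 2 μ →
      Integrable (fun ω => f ω * g ω) μ := by
    intro f g hf hg
    have h1 : MemLp (f • g) 1 μ := hg.smul hf
    rw [memLp_one_iff_integrable] at h1
    exact h1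
  set c := ∫ ω, Z ω ∂μ with hc
  set m := ∫ ω, hbar (ε ω) ∂μ with hm
  set a := ∫ ω, ε ω * hbar (ε ω) ∂μ with ha
  have int_hbar : Integrable (fun ω => hbar (ε ω)) μ := hhbar2.integrable one_le_two
  have int_e : Integrable ε μ := hε2.integrable one_le_two
  have int_e2 : Integrable (fun ω => ε ω * ε ω) μ := mulint _ _ hε2 hε2
  have int_ehbar : Integrable (fun ω => ε ω * hbar (ε ω)) μ := mulint _ _ hε2 hhbar2
  have he2 : ∫ ω, ε ω * ε ω ∂μ = σ2 := by
    rw [← hεvar]; congr 1; ext ω; ring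
  -- Part 1
  have i1 : Integrable (fun ω => hbar (ε ω) - m) μ := int_hbar.sub (integrable_const m)
  have i2 : Integrable (fun ω => a / σ2 * ε ω) μ := int_e.const_mul _
  have part1 : ∫ ω, sstar (ε ω) ∂μ = 0 := by
    simp_rw [hsstar]
    rw [integral_const_mul, integral_sub i1 i2, integral_sub int_hbar (integrable_const m),
      integral_const_mul, integral_const, hεmean]
    simp [hm]
  have part2 : ∫ ω, ε ω * sstar (ε ω) ∂μ = 0 := by
    have : ∀ ω, ε ω * sstar (ε ω) =
        c⁻¹ * (ε ω * hbar (ε ω) - m * ε ω - a / σ2 * (ε ω * ε ω)) := by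
      intro ω; rw [hsstar]; ring
    simp_rw [this]
    have j1 : Integrable (fun ω => ε ω * hbar (ε ω) - m * ε ω) μ := int_ehbar.sub (int_e.const_mul m)
    have j2 : Integrable (fun ω => a / σ2 * (ε ω * ε ω)) μ := int_e2.const_mul _
    rw [integral_const_mul, integral_sub j1 j2, integral_sub int_ehbar (int_e.const_mul m),
      integral_const_mul, integral_const_mul, hεmean, he2]
    field_simp
    simp [ha]
  refine ⟨⟨part1, part2⟩, ?_⟩
  intro s hs hs2 hsmean hsorth
  -- measurability of sstar
  have hsstarm : Measurable sstar := by
    have : sstar = fun y => c⁻¹ * (hbar y - m - a / σ2 * y) := funext hsstar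
    rw [this]
    exact measurable_const.mul (((hhbar.sub measurable_const).sub
      (measurable_const.mul measurable_id)))
  -- independence step
  have hg : Measurable fun y => sstar y * s y := hsstarm.mul hs
  have hind2 : ProbabilityTheory.IndepFun Z (fun ω => sstar (ε ω) * s (ε ω)) μ :=
    hindep.comp measurable_id hg
  have step1 : ∫ ω, Z ω * (sstar (ε ω) * s (ε ω)) ∂μ =
      c * ∫ ω, sstar (ε ω) * s (ε ω) ∂μ :=
    hind2.integral_mul_eq_mul_integral hZ.aestronglyMeasurable (hg.comp hε).aestronglyMeasurable
  -- integrabilities for part 3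
  have int_s : Integrable (fun ω => s (ε ω)) μ := hs2.integrable one_le_two
  have int_es : Integrable (fun ω => ε ω * s (ε ω)) μ := mulint _ _ hε2 hs2
  have int_hbars : Integrable (fun ω => hbar (ε ω) * s (ε ω)) μ := mulint _ _ hhbar2 hs2
  have int_Hs : Integrable (fun ω => s (ε ω) * H ω) μ := mulint _ _ hs2 hH2
  -- step 2: ∫ sstar(ε) s(ε) = c⁻¹ ∫ hbar(ε) s(ε)
  have step2 : ∫ ω, sstar (ε ω) * s (ε ω) ∂μ = c⁻¹ * ∫ ω, hbar (ε ω) * s (ε ω) ∂μ := by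
    have : ∀ ω, sstar (ε ω) * s (ε ω) =
        c⁻¹ * (hbar (ε ω) * s (ε ω) - m * s (ε ω) - a / σ2 * (ε ω * s (ε ω))) := by
      intro ω; rw [hsstar]; ring
    simp_rw [this]
    have k1 : Integrable (fun ω => hbar (ε ω) * s (ε ω) - m * s (ε ω)) μ :=
      int_hbars.sub (int_s.const_mul m)
    have k2 : Integrable (fun ω => a / σ2 * (ε ω * s (ε ω))) μ := int_es.const_mul _
    rw [integral_const_mul, integral_sub k1 k2, integral_sub int_hbars (int_s.const_mul m),
      integral_const_mul, integral_const_mul, hsmean, hsorth]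
    ring
  -- step 3: conditional expectation
  let mε := MeasurableSpace.comap ε inferInstance
  have hmle : mε ≤ _ := hε.comap_le
  have hsm : StronglyMeasurable[mε] (fun ω => s (ε ω)) :=
    (hs.comp (comap_measurable ε)).stronglyMeasurable
  have intH : Integrable H μ := hH2.integrable one_le_two
  have pullout : μ[(fun ω => s (ε ω)) * H | mε] =ᵐ[μ]
      (fun ω => s (ε ω)) * μ[H | mε] :=
    condExp_mul_of_stronglyMeasurable_left hsm (by exact int_Hs) intH
  have step3 : ∫ ω, H ω * s (ε ω) ∂μ = ∫ ω, hbar (ε ω) * s (ε ω) ∂μ := by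
    have e1 : ∫ ω, H ω * s (ε ω) ∂μ = ∫ ω, ((fun ω => s (ε ω)) * H) ω ∂μ := by
      congr 1; ext ω; simp [mul_comm]
    have e2 : ∫ ω, ((fun ω => s (ε ω)) * H) ω ∂μ
        = ∫ ω, (μ[(fun ω => s (ε ω)) * H | mε]) ω ∂μ := (integral_condExp hmle).symm
    have e3 : ∫ ω, (μ[(fun ω => s (ε ω)) * H | mε]) ω ∂μ
        = ∫ ω, s (ε ω) * hbar (ε ω) ∂μ := by
      refine integral_congr_ae ?_
      filter_upwards [pullout, hcond] with ω h1 h2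
      simp only [Pi.mul_apply] at h1 ⊢
      rw [h1, h2]
    rw [e1, e2, e3]
    congr 1; ext ω; ring
  calc ∫ ω, Z ω * sstar (ε ω) * s (ε ω) ∂μ
      = ∫ ω, Z ω * (sstar (ε ω) * s (ε ω)) ∂μ := by congr 1; ext ω; ring
    _ = c * ∫ ω, sstar (ε ω) * s (ε ω) ∂μ := step1
    _ = c * (c⁻¹ * ∫ ω, hbar (ε ω) * s (ε ω) ∂μ) := by rw [step2]
    _ = ∫ ω, hbar (ε ω) * s (ε ω) ∂μ := by
        field_simp
    _ = ∫ ω, H ω * s (ε ω) ∂μ := step3.symm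
end

section
/- Let V₀ = {v ∈ L²(M) : ∫ v(x,y) Q(x,dy) = 0 M-a.e.} where Q(x,dy) = f(y − r ϑ x) dy with f a mean-zero density, and let V = {v(x,y) = s(y − r ϑ x) + ℓ(y − r ϑ x)·(ṙ ϑ x)ᵀt : s ∈ S, t ∈ ℝ^p}, where S = {s ∈ L²(F) : ∫ s f = 0, ∫ y s(y) f(y) dy = 0} and ℓ = −f'/f with E ℓ(ε) = 0. Then V ⊆ V₀, and every element of V can be rewritten as tᵀζ + s̃(ε) with s̃ ∈ S and ζ = (ṙ ϑ X − μ)ℓ(ε) + μ ε/σ², μ = E[ṙ ϑ X|Z=1]; specifically s̃(ε) = s(ε) + tᵀμ·(ℓ(ε) − ε/σ²). -/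
open MeasureTheory

/-- Tangent-space decomposition of Section 4: every perturbation
`v(x,y) = s(y - r ϑ x) + ℓ(y - r ϑ x) (ṙ ϑ x)ᵀ t` with `s ∈ S` satisfies
`∫ v(x,y) Q(x,dy) = 0` (so `V ⊆ V₀`), and can be rewritten as `tᵀ ζ + s̃(ε)` with
`ζ = (ṙ ϑ x - μ) ℓ(ε) + μ ε / σ²` and `s̃(ε) = s(ε) + tᵀμ (ℓ(ε) - ε/σ²) ∈ S`. -/
theorem tangent_space_decomposition {𝓧 : Type*} {p : ℕ}
    (f : ℝ → ℝ) (hf0 : ∀ y, 0 ≤ f y) (hfdens : ∫ y, f y = 1)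
    (hfmean : ∫ y, y * f y = 0)
    (σ2 : ℝ) (hσ2 : 0 < σ2) (hfvar : ∫ y, y ^ 2 * f y = σ2)
    (ℓ : ℝ → ℝ) (hℓdef : ∀ y, ℓ y = -(deriv f y) / f y)
    (hℓ0 : ∫ y, ℓ y * f y = 0) (hℓ1 : ∫ y, y * ℓ y * f y = 1)
    (r : 𝓧 → ℝ) (rdot : 𝓧 → Fin p → ℝ)
    (μvec : Fin p → ℝ)   -- μ = E[ṙ ϑ X | Z = 1]
    (s : ℝ → ℝ)
    (hs : (∫ y, s y * f y = 0) ∧ (∫ y, y * s y * f y = 0))   -- s ∈ S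
    (hsf : Integrable (fun y => s y * f y))
    (hysf : Integrable (fun y => y * s y * f y))
    (hℓf : Integrable (fun y => ℓ y * f y))
    (hyℓf : Integrable (fun y => y * ℓ y * f y))
    (hyf : Integrable (fun y => y * f y))
    (hy2f : Integrable (fun y => y ^ 2 * f y))
    (t : Fin p → ℝ)
    (v : 𝓧 → ℝ → ℝ)
    (hv : ∀ x y, v x y = s (y - r x) + ℓ (y - r x) * ∑ i, rdot x i * t i)
    (ζ : 𝓧 → ℝ → Fin p → ℝ)
    (hζ : ∀ x e i, ζ x e i = (rdot x i - μvec i) * ℓ e + μvec i * e / σ2)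
    (stilde : ℝ → ℝ)
    (hstilde : ∀ e, stilde e = s e + (∑ i, t i * μvec i) * (ℓ e - e / σ2)) :
    -- V ⊆ V₀ : the perturbation integrates to zero under Q(x, dy) = f(y - r ϑ x) dy
    (∀ x, ∫ y, v x y * f (y - r x) = 0) ∧
    -- rewriting v as tᵀ ζ + s̃(ε)
    (∀ x e, v x (r x + e) = (∑ i, t i * ζ x e i) + stilde e) ∧
    -- s̃ ∈ S
    ((∫ y, stilde y * f y = 0) ∧ (∫ y, y * stilde y * f y = 0)) := by
  obtain ⟨hs0, hs1⟩ := hs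
  set c : ℝ := ∑ i, t i * μvec i with hc
  refine ⟨?_, ?_, ?_, ?_⟩
  · intro x
    have h1 : (∫ y, v x y * f (y - r x)) =
        ∫ y, (s y * f y + ℓ y * f y * ∑ i, rdot x i * t i) := by
      rw [← integral_sub_right_eq_self
        (fun y => s y * f y + ℓ y * f y * ∑ i, rdot x i * t i) (r x)]
      congr 1; funext y
      rw [hv]; ring
    rw [h1, integral_add hsf (hℓf.mul_const _), integral_mul_const, hs0, hℓ0]
    ring
  · intro x e
    rw [hv, hstilde]
    have key : (∑ i, t i * ζ x e i)
        = (∑ i, t i * rdot x i) * ℓ e - (∑ i, t i * μvec i) * ℓ e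
          + (∑ i, t i * μvec i) * (e / σ2) := by
      have h2 : (∑ i, t i * ζ x e i)
          = ∑ i, (t i * rdot x i * ℓ e - t i * μvec i * ℓ e
              + t i * μvec i * (e / σ2)) := by
        refine Finset.sum_congr rfl fun i _ => ?_
        rw [hζ]; ring
      rw [h2, Finset.sum_add_distrib, Finset.sum_sub_distrib,
        ← Finset.sum_mul, ← Finset.sum_mul, ← Finset.sum_mul]
    rw [key]
    have h3 : (∑ i, rdot x i * t i) = ∑ i, t i * rdot x i := by
      refine Finset.sum_congr rfl fun i _ => ?_; ring
    rw [h3, hc]; ring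
  · have hA : Integrable (fun y => s y * f y + c * (ℓ y * f y)) :=
      hsf.add (hℓf.const_mul c)
    have hB : Integrable (fun y => (c / σ2) * (y * f y)) := hyf.const_mul _
    have h1 : (∫ y, stilde y * f y)
        = ∫ y, ((s y * f y + c * (ℓ y * f y)) - (c / σ2) * (y * f y)) := by
      congr 1; funext y; rw [hstilde]; ring
    rw [h1, integral_sub hA hB, integral_add hsf (hℓf.const_mul _),
      integral_const_mul, integral_const_mul, hs0, hℓ0, hfmean]
    ring
  · have hA : Integrable (fun y => y * s y * f y + c * (y * ℓ y * f y)) :=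
      hysf.add (hyℓf.const_mul c)
    have hB : Integrable (fun y => (c / σ2) * (y ^ 2 * f y)) := hy2f.const_mul _
    have h1 : (∫ y, y * stilde y * f y)
        = ∫ y, ((y * s y * f y + c * (y * ℓ y * f y)) - (c / σ2) * (y ^ 2 * f y)) := by
      congr 1; funext y; rw [hstilde]; ring
    rw [h1, integral_sub hA hB, integral_add hysf (hyℓf.const_mul _),
      integral_const_mul, integral_const_mul, hs1, hℓ1, hfvar]
    field_simp
    ring
end
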